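/- Let G be a finite group with the d-UHJP and H a normal subgroup of G. Then the quotient group G/H has the d-UHJP. -/
import Mathlib


/-- Evaluation of a variable word: letters are left unchanged, the variable `v_s`
is replaced by `s • x`. -/
def evalW {S X : Type*} [SMul S X] {N : ℕ} (w : Fin N → X ⊕ S) (x : X) : Fin N → X :=
  fun i => Sum.elim id (fun s => s • x) (w i)

open scoped Classical in
/-- `w` is a uniform variable word of degree `d`: every variable `v_s` (`s : S`)
occurs the same positive number of times, and the total number of variable
positions is `d`. -/
def IsUnifWord {S X : Type*} {N : ℕ} (w : Fin N → X ⊕ S) (d : ℕ) : Prop :=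
  (∃ m : ℕ, 0 < m ∧ ∀ s : S,
      (Finset.univ.filter (fun i => w i = Sum.inr s)).card = m) ∧
  (Finset.univ.filter (fun i => (w i).isRight = true)).card = d

/-- `G` has the `d`-uniform Hales–Jewett property. -/
def UHJP (G : Type*) [Group G] (d : ℕ) : Prop :=
  ∀ r : ℕ, ∃ N : ℕ, ∀ c : (Fin N → G) → Fin r,
    ∃ w : Fin N → G ⊕ G, IsUnifWord w d ∧
      ∀ g g' : G, c (evalW w g) = c (evalW w g')

/-- `(S, X)` has the `(E, d)`-uniform Hales–Jewett property. -/
def PairUHJP (S X : Type*) [SMul S X] (E : X → X → Prop) (d : ℕ) : Prop :=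
  ∀ r : ℕ, ∃ N : ℕ, ∀ c : (Fin N → X) → Fin r,
    ∃ w : Fin N → X ⊕ S, IsUnifWord w d ∧
      ∀ x x' : X, E x x' → c (evalW w x) = c (evalW w x')

open scoped Classical

lemma fiber_card_aux {G : Type*} [Group G] [Fintype G] (H : Subgroup G) [H.Normal]
    (t : G ⧸ H) :
    (Finset.univ.filter (fun s : G => (s : G ⧸ H) = t)).card = Fintype.card H := by
  obtain ⟨g₀, rfl⟩ := QuotientGroup.mk_surjective t
  rw [← Fintype.card_subtype]
  refine Fintype.card_congr ?_
  refine ⟨fun s => ⟨g₀⁻¹ * s.1, (QuotientGroup.eq).mp s.2.symm⟩,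
    fun h => ⟨g₀ * h.1, ?_⟩, fun s => by ext; group, fun h => by ext; group⟩
  have : ((h.1 : G) : G ⧸ H) = 1 := (QuotientGroup.eq_one_iff _).mpr h.2
  rw [QuotientGroup.mk_mul, this, mul_one]

/-- If a finite group `G` has the `d`-UHJP, then so does every quotient `G/H` by a normal
subgroup `H`. -/
theorem UHJP_quotient (G : Type*) [Group G] [Fintype G] (d : ℕ) (hG : UHJP G d)
    (H : Subgroup G) [H.Normal] : UHJP (G ⧸ H) d := by
  intro r
  obtain ⟨N, hN⟩ := hG r
  refine ⟨N, fun c => ?_⟩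
  obtain ⟨w, ⟨⟨m, hm, hms⟩, hd⟩, hmono⟩ :=
    hN (fun f => c (fun i => ((f i : G) : G ⧸ H)))
  set w' : Fin N → (G ⧸ H) ⊕ (G ⧸ H) :=
    fun i => Sum.map (fun x : G => (x : G ⧸ H)) (fun x : G => (x : G ⧸ H)) (w i) with hw'
  have heval : ∀ g : G, evalW w' (g : G ⧸ H) = fun i => ((evalW w g i : G) : G ⧸ H) := by
    intro g
    funext i
    simp only [evalW, hw']
    cases h : w i with
    | inl x => simp
    | inr s => simp [smul_eq_mul, QuotientGroup.mk_mul]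
  refine ⟨w', ⟨⟨m * Fintype.card H, ?_, fun t => ?_⟩, ?_⟩, ?_⟩
  · exact Nat.mul_pos hm Fintype.card_pos
  · have hsplit : (Finset.univ.filter (fun i => w' i = Sum.inr t)) =
        (Finset.univ.filter (fun s : G => (s : G ⧸ H) = t)).biUnion
          (fun s => Finset.univ.filter (fun i => w i = Sum.inr s)) := by
      ext i
      simp only [Finset.mem_biUnion, Finset.mem_filter, Finset.mem_univ, true_and, hw']
      cases h : w i with
      | inl x => simp
      | inr s =>
        constructor
        · intro hi
          exact ⟨s, by simpa using hi, rfl⟩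
        · rintro ⟨s', hs', hss'⟩
          obtain rfl : s = s' := by simpa using hss'
          simpa using hs'
    have hdisj : ∀ s ∈ (Finset.univ : Finset G), ∀ s' ∈ (Finset.univ : Finset G), s ≠ s' →
        Disjoint (Finset.univ.filter (fun i => w i = Sum.inr s))
          (Finset.univ.filter (fun i => w i = Sum.inr s')) := ?_
    · have hcard : ((Finset.univ.filter (fun i => w' i = Sum.inr t)).card : ℕ)
          = m * Fintype.card H := by
        rw [hsplit,
          Finset.card_biUnion (fun s hs s' hs' h => hdisj s (Finset.mem_univ s) s' (Finset.mem_univ s') h),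
          Finset.sum_congr rfl (fun s _ => hms s),
          Finset.sum_const, smul_eq_mul, fiber_card_aux H t, mul_comm]
      convert hcard using 2
      ext i
      simp [Finset.mem_filter]
    intro s _ s' _ hss'
    simp only [Finset.disjoint_filter]
    rintro i _ hi hi'
    exact hss' (by simpa [hi] using hi')
  · rw [← hd]
    congr 1
    ext i
    simp [hw', Sum.isRight_map]
  · intro q q'
    obtain ⟨g, rfl⟩ := QuotientGroup.mk_surjective q
    obtain ⟨g', rfl⟩ := QuotientGroup.mk_surjective q'
    rw [heval, heval]
    exact hmono g g'
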